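/- Let q1, q2, q3, q4 be four points in the Euclidean plane ℝ² with q2 − q1 = t • (q3 − q4) for some t > 0 and q1, q2, q4 not collinear; let r_ij denote their mutual distances, assume the ordering r13 ≥ r24 > r12 ≥ r14 ≥ r23 ≥ r34, and suppose positive masses m1, m2, m3, m4 and real numbers λ, σ satisfy the trapezoidal central configuration equations for these distances. Then the masses satisfy m3 ≤ m4 ≤ m2 and m3 ≤ m1. -/

import Mathlib

set_option maxHeartbeats 1000000

private lemma le_of_sq_le' {a b : ℝ} (ha : 0 ≤ a) (hb : 0 ≤ b) (h : a^2 ≤ b^2) : a ≤ b := by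
  nlinarith [h, ha, hb]

private lemma pos_aux {m x S : ℝ} (hm : 0 < m) (h : m * x = S) (hS : 0 < S) : 0 < x := by
  by_contra hx
  push_neg at hx
  nlinarith [mul_nonpos_of_nonneg_of_nonpos hm.le hx]

private lemma cvx3 (x y z : ℝ) (hx : 0 < x) (hxy : x ≤ y) (hyz : y ≤ z) :
    ((y^3)⁻¹ - (z^3)⁻¹) * (z - x) ≤ ((x^3)⁻¹ - (z^3)⁻¹) * (z - y) := by
  obtain ⟨u, hu, rfl⟩ : ∃ u, 0 ≤ u ∧ y = x + u := ⟨y - x, by linarith, by ring⟩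
  obtain ⟨v, hv, rfl⟩ : ∃ v, 0 ≤ v ∧ z = x + u + v := ⟨z - (x + u), by linarith, by ring⟩
  have hxu : 0 < x + u := by linarith
  have hxuv : 0 < x + u + v := by linarith
  have hden : (0:ℝ) < x^3*(x+u)^3*(x+u+v)^3 :=
    mul_pos (mul_pos (pow_pos hx 3) (pow_pos hxu 3)) (pow_pos hxuv 3)
  rw [← sub_nonneg]
  have key : ((x^3)⁻¹ - ((x+u+v)^3)⁻¹) * ((x+u+v) - (x+u))
      - (((x+u)^3)⁻¹ - ((x+u+v)^3)⁻¹) * ((x+u+v) - x)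
      = (u*v*(u^5 + 3*u^4*v + 3*u^3*v^2 + u^2*v^3 + 6*x*u^4 + 15*x*u^3*v + 12*x*u^2*v^2
          + 3*x*u*v^3 + 15*x^2*u^3 + 30*x^2*u^2*v + 18*x^2*u*v^2 + 3*x^2*v^3
          + 16*x^3*u^2 + 24*x^3*u*v + 8*x^3*v^2 + 6*x^4*u + 6*x^4*v))
        / (x^3*(x+u)^3*(x+u+v)^3) := by
    rw [eq_div_iff hden.ne']
    field_simp
    ring
  rw [key]
  apply div_nonneg _ hden.le
  have p1 : (0:ℝ) ≤ x := hx.le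
  have t2 : 0 ≤ u^5 + 3*u^4*v + 3*u^3*v^2 + u^2*v^3 + 6*x*u^4 + 15*x*u^3*v + 12*x*u^2*v^2
        + 3*x*u*v^3 + 15*x^2*u^3 + 30*x^2*u^2*v + 18*x^2*u*v^2 + 3*x^2*v^3
        + 16*x^3*u^2 + 24*x^3*u*v + 8*x^3*v^2 + 6*x^4*u + 6*x^4*v := by
    linarith [pow_nonneg hu 5, mul_nonneg (pow_nonneg hu 4) hv,
      mul_nonneg (pow_nonneg hu 3) (pow_nonneg hv 2),
      mul_nonneg (pow_nonneg hu 2) (pow_nonneg hv 3),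
      mul_nonneg p1 (pow_nonneg hu 4),
      mul_nonneg p1 (mul_nonneg (pow_nonneg hu 3) hv),
      mul_nonneg p1 (mul_nonneg (pow_nonneg hu 2) (pow_nonneg hv 2)),
      mul_nonneg p1 (mul_nonneg hu (pow_nonneg hv 3)),
      mul_nonneg (pow_nonneg p1 2) (pow_nonneg hu 3),
      mul_nonneg (pow_nonneg p1 2) (mul_nonneg (pow_nonneg hu 2) hv),
      mul_nonneg (pow_nonneg p1 2) (mul_nonneg hu (pow_nonneg hv 2)),
      mul_nonneg (pow_nonneg p1 2) (pow_nonneg hv 3),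
      mul_nonneg (pow_nonneg p1 3) (pow_nonneg hu 2),
      mul_nonneg (pow_nonneg p1 3) (mul_nonneg hu hv),
      mul_nonneg (pow_nonneg p1 3) (pow_nonneg hv 2),
      mul_nonneg (pow_nonneg p1 4) hu,
      mul_nonneg (pow_nonneg p1 4) hv]
  exact mul_nonneg (mul_nonneg hu hv) t2

private lemma trap_dichotomy (p s r14 r23 r24 : ℝ) (hp : 0 < p) (hs : 0 < s)
    (o1 : s ≤ r23) (o2 : r23 ≤ r14) (o3 : r14 ≤ p) (o4 : p < r24)
    (idpre : p*r23^2 = p*r14^2 + (s-p)*(r14^2+p^2-r24^2) + p*(s-p)^2) :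
    p*(r24-p) ≤ s*(r24-r14) ∨ p*(r24-r23) ≤ s*(r24-s) := by
  by_contra hcon
  push_neg at hcon
  obtain ⟨N1, N2⟩ := hcon
  have hr23 : 0 < r23 := hs.trans_le o1
  have hr14 : 0 < r14 := hr23.trans_le o2
  have hr24 : 0 < r24 := hp.trans o4
  -- s < p
  have t1 : s*(r24-p) ≤ s*(r24-r14) := by
    linarith [mul_le_mul_of_nonneg_left o3 hs.le]
  have hps : s < p := by
    by_contra hc
    push_neg at hc
    linarith [mul_nonneg (sub_nonneg.2 hc) (sub_pos.2 o4).le, t1, N1]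
  have hps' : 0 < p - s := sub_pos.2 hps
  have hA' : s*(p - r14) < (p-s)*(r24-p) := by linarith [N1]
  have hrho : p*r23 < (p-s)*r24 + s^2 := by linarith [N2]
  have hsq : (p*r23)*(p*r23) < ((p-s)*r24 + s^2)*((p-s)*r24 + s^2) :=
    mul_self_lt_mul_self (mul_nonneg hp.le hr23.le) hrho
  have idp : p^2*r23^2 = p*(p*r14^2 + (s-p)*(r14^2+p^2-r24^2) + p*(s-p)^2) := by
    linear_combination p*idpre
  have hlin : s*(p-s)*((r24-s)^2+s*p) - s*p*(p^2-r14^2)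
      = (p*r23)*(p*r23) - ((p-s)*r24 + s^2)*((p-s)*r24 + s^2) := by
    linear_combination -idp
  have hB' : s*(p-s)*((r24-s)^2+s*p) < s*p*(p^2-r14^2) := by linarith [hsq, hlin]
  -- G
  have e1 : s*p*(p^2-r14^2) ≤ 2*p^2*(s*(p-r14)) := by
    linarith [mul_nonneg (mul_nonneg hs.le hp.le) (sq_nonneg (p-r14))]
  have h2p : (0:ℝ) < 2*p^2 := by nlinarith [mul_pos hp hp]
  have e2 : 2*p^2*(s*(p-r14)) < 2*p^2*((p-s)*(r24-p)) := by
    linarith [mul_lt_mul_of_pos_left hA' h2p]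
  have e3 : (p-s)*(s*((r24-s)^2+s*p)) < (p-s)*(2*p^2*(r24-p)) := by
    linarith [hB', e1, e2]
  have hG : s*((r24-s)^2+s*p) < 2*p^2*(r24-p) := lt_of_mul_lt_mul_left e3 hps'.le
  -- F
  have h23sq : r23*r23 ≤ r14*r14 := mul_self_le_mul_self hr23.le o2
  have eF : (p-s)*(p*(p-s)) ≤ (p-s)*(r14^2+p^2-r24^2) := by
    linarith [idpre, mul_le_mul_of_nonneg_left h23sq hp.le]
  have eF2 : p*(p-s) ≤ r14^2+p^2-r24^2 := le_of_mul_le_mul_left eF hps'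
  have hFpre : r24^2 - s*p ≤ r14^2 := by linarith [eF2]
  have e4 : s*((p-s)*((r24-s)^2+s*p)) < s*(p*(p^2-r14^2)) := by linarith [hB']
  have hB'' : (p-s)*((r24-s)^2+s*p) < p*(p^2-r14^2) := lt_of_mul_lt_mul_left e4 hs.le
  have hF : (p-s)*((r24-s)^2+s*p) < p*(p^2 + s*p - r24^2) := by
    linarith [hB'', mul_le_mul_of_nonneg_left hFpre hp.le]
  -- contradiction
  linarith [hG, hF, mul_nonneg hp.le (sq_nonneg (r24-s)), mul_nonneg hp.le (sq_nonneg (r24-p))]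

private lemma masses_lemma (p s r13 r14 r23 r24 m1 m2 m3 m4 lam sig : ℝ)
    (hp : 0 < p) (hs : 0 < s)
    (o1 : s ≤ r23) (o2 : r23 ≤ r14) (o3 : r14 ≤ p) (o4 : p < r24) (o5 : r24 ≤ r13)
    (hm1 : 0 < m1) (hm2 : 0 < m2) (hm3 : 0 < m3) (hm4 : 0 < m4)
    (idpre : p*r23^2 = p*r14^2 + (s-p)*(r14^2+p^2-r24^2) + p*(s-p)^2)
    (h12 : m1*m2*((p^3)⁻¹ - lam) = sig*s^2)
    (h34 : m3*m4*((s^3)⁻¹ - lam) = sig*p^2)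
    (h13 : m1*m3*((r13^3)⁻¹ - lam) = -(sig*p*s))
    (h24 : m2*m4*((r24^3)⁻¹ - lam) = -(sig*p*s))
    (h14 : m1*m4*((r14^3)⁻¹ - lam) = sig*p*s)
    (h23 : m2*m3*((r23^3)⁻¹ - lam) = sig*p*s) :
    m3 ≤ m4 ∧ m4 ≤ m2 ∧ m3 ≤ m1 := by
  have hr23 : 0 < r23 := hs.trans_le o1
  have hr14 : 0 < r14 := hr23.trans_le o2
  have hr24 : 0 < r24 := hp.trans o4
  have hr13 : 0 < r13 := hr24.trans_le o5
  have hsp : s ≤ p := o1.trans (o2.trans o3)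
  have i1 : (r13^3)⁻¹ ≤ (r24^3)⁻¹ :=
    inv_anti₀ (pow_pos hr24 3) (pow_le_pow_left₀ hr24.le o5 3)
  have i2 : (r24^3)⁻¹ < (p^3)⁻¹ := by
    have h1 : p^3 < r24^3 := pow_lt_pow_left₀ o4 hp.le (by norm_num)
    exact inv_strictAnti₀ (pow_pos hp 3) h1
  have i3 : (p^3)⁻¹ ≤ (r14^3)⁻¹ :=
    inv_anti₀ (pow_pos hr14 3) (pow_le_pow_left₀ hr14.le o3 3)
  have i4 : (r14^3)⁻¹ ≤ (r23^3)⁻¹ :=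
    inv_anti₀ (pow_pos hr23 3) (pow_le_pow_left₀ hr23.le o2 3)
  have i5 : (r23^3)⁻¹ ≤ (s^3)⁻¹ :=
    inv_anti₀ (pow_pos hs 3) (pow_le_pow_left₀ hs.le o1 3)
  -- S = sig*p*s > 0
  have hSpos : 0 < sig*p*s := by
    rcases lt_trichotomy (sig*p*s) 0 with hneg | hzero | hposS
    · exfalso
      have ha' : 0 < (r13^3)⁻¹ - lam :=
        pos_aux (mul_pos hm1 hm3)
          (show (m1*m3)*((r13^3)⁻¹ - lam) = -(sig*p*s) by linear_combination h13)
          (by linarith)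
      have hc' : 0 < lam - (r14^3)⁻¹ :=
        pos_aux (mul_pos hm1 hm4)
          (show (m1*m4)*(lam - (r14^3)⁻¹) = -(sig*p*s) by linear_combination -h14)
          (by linarith)
      linarith
    · exfalso
      have e14 : m1*m4*((r14^3)⁻¹ - lam) = 0 := by rw [h14, hzero]
      have e24 : m2*m4*((r24^3)⁻¹ - lam) = 0 := by rw [h24, hzero]; ring
      have n14 : (r14^3)⁻¹ - lam = 0 := by
        rcases mul_eq_zero.1 e14 with h | h
        · exact absurd h (mul_pos hm1 hm4).ne'
        · exact h
      have n24 : (r24^3)⁻¹ - lam = 0 := by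
        rcases mul_eq_zero.1 e24 with h | h
        · exact absurd h (mul_pos hm2 hm4).ne'
        · exact h
      linarith
    · exact hposS
  have hsig : 0 < sig := pos_aux (mul_pos hp hs) (show (p*s)*sig = sig*p*s by ring) hSpos
  -- letters positive
  have ha : 0 < lam - (r13^3)⁻¹ :=
    pos_aux (mul_pos hm1 hm3)
      (show (m1*m3)*(lam - (r13^3)⁻¹) = sig*p*s by linear_combination -h13) hSpos
  have hb : 0 < lam - (r24^3)⁻¹ :=
    pos_aux (mul_pos hm2 hm4)
      (show (m2*m4)*(lam - (r24^3)⁻¹) = sig*p*s by linear_combination -h24) hSpos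
  have hc : 0 < (r14^3)⁻¹ - lam :=
    pos_aux (mul_pos hm1 hm4)
      (show (m1*m4)*((r14^3)⁻¹ - lam) = sig*p*s by linear_combination h14) hSpos
  have hd : 0 < (r23^3)⁻¹ - lam :=
    pos_aux (mul_pos hm2 hm3)
      (show (m2*m3)*((r23^3)⁻¹ - lam) = sig*p*s by linear_combination h23) hSpos
  have he : 0 < (p^3)⁻¹ - lam :=
    pos_aux (mul_pos hm1 hm2)
      (show (m1*m2)*((p^3)⁻¹ - lam) = sig*s^2 by linear_combination h12)
      (mul_pos hsig (pow_pos hs 2))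
  have hf : 0 < (s^3)⁻¹ - lam :=
    pos_aux (mul_pos hm3 hm4)
      (show (m3*m4)*((s^3)⁻¹ - lam) = sig*p^2 by linear_combination h34)
      (mul_pos hsig (pow_pos hp 2))
  -- pair equalities
  have eac : m3*(lam - (r13^3)⁻¹) = m4*((r14^3)⁻¹ - lam) :=
    mul_left_cancel₀ hm1.ne' (by linear_combination -h13 - h14)
  have edb : m3*((r23^3)⁻¹ - lam) = m4*(lam - (r24^3)⁻¹) :=
    mul_left_cancel₀ hm2.ne' (by linear_combination h23 + h24)
  -- ef = cd
  have hefcd : ((p^3)⁻¹ - lam)*((s^3)⁻¹ - lam) = ((r14^3)⁻¹ - lam)*((r23^3)⁻¹ - lam) := by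
    have t1 : (m1*m2*((p^3)⁻¹ - lam)) * (m3*m4*((s^3)⁻¹ - lam)) = (sig*s^2)*(sig*p^2) := by
      rw [h12, h34]
    have t2 : (m1*m4*((r14^3)⁻¹ - lam)) * (m2*m3*((r23^3)⁻¹ - lam)) = (sig*p*s)*(sig*p*s) := by
      rw [h14, h23]
    have key : (m1*m2*m3*m4) * (((p^3)⁻¹ - lam)*((s^3)⁻¹ - lam))
        = (m1*m2*m3*m4) * (((r14^3)⁻¹ - lam)*((r23^3)⁻¹ - lam)) := by
      linear_combination t1 - t2
    exact mul_left_cancel₀ (mul_pos (mul_pos (mul_pos hm1 hm2) hm3) hm4).ne' key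
  -- crux : p*d ≤ s*f
  have crux : p*((r23^3)⁻¹ - lam) ≤ s*((s^3)⁻¹ - lam) := by
    rcases trap_dichotomy p s r14 r23 r24 hp hs o1 o2 o3 o4 idpre with hD1 | hD2
    · have cvx := cvx3 r14 p r24 hr14 o3 o4.le
      have hcu : (0:ℝ) ≤ (r14^3)⁻¹ - (r24^3)⁻¹ := by linarith
      have m1' := mul_le_mul_of_nonneg_left cvx hp.le
      have m2' := mul_le_mul_of_nonneg_left hD1 hcu
      have key : (p*((p^3)⁻¹ - (r24^3)⁻¹))*(r24 - r14) ≤ (s*((r14^3)⁻¹ - (r24^3)⁻¹))*(r24 - r14) := by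
        linarith [m1', m2']
      have hV1 : p*((p^3)⁻¹ - (r24^3)⁻¹) ≤ s*((r14^3)⁻¹ - (r24^3)⁻¹) :=
        le_of_mul_le_mul_right key (by linarith : (0:ℝ) < r24 - r14)
      have hpe_sc : p*((p^3)⁻¹ - lam) ≤ s*((r14^3)⁻¹ - lam) := by
        linarith [hV1, mul_nonneg (sub_nonneg.2 hsp) hb.le]
      have k1 : (p*((p^3)⁻¹ - lam))*((s^3)⁻¹ - lam) ≤ (s*((r14^3)⁻¹ - lam))*((s^3)⁻¹ - lam) :=
        mul_le_mul_of_nonneg_right hpe_sc hf.le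
      have hefcd' : p*(((p^3)⁻¹ - lam)*((s^3)⁻¹ - lam))
          = p*(((r14^3)⁻¹ - lam)*((r23^3)⁻¹ - lam)) := by rw [hefcd]
      have k3 : ((r14^3)⁻¹ - lam)*(p*((r23^3)⁻¹ - lam)) ≤ ((r14^3)⁻¹ - lam)*(s*((s^3)⁻¹ - lam)) := by
        linarith [k1, hefcd']
      exact le_of_mul_le_mul_left k3 hc
    · have cvx := cvx3 s r23 r24 hs o1 (o2.trans (o3.trans o4.le))
      have hcu : (0:ℝ) ≤ (s^3)⁻¹ - (r24^3)⁻¹ := by linarith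
      have m1' := mul_le_mul_of_nonneg_left cvx hp.le
      have m2' := mul_le_mul_of_nonneg_left hD2 hcu
      have key : (p*((r23^3)⁻¹ - (r24^3)⁻¹))*(r24 - s) ≤ (s*((s^3)⁻¹ - (r24^3)⁻¹))*(r24 - s) := by
        linarith [m1', m2']
      have hV2 : p*((r23^3)⁻¹ - (r24^3)⁻¹) ≤ s*((s^3)⁻¹ - (r24^3)⁻¹) :=
        le_of_mul_le_mul_right key (by linarith : (0:ℝ) < r24 - s)
      linarith [hV2, mul_nonneg (sub_nonneg.2 hsp) hb.le]
  -- m3 ≤ m4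
  have hm34 : m3 ≤ m4 := by
    have sq : (m3*(lam - (r13^3)⁻¹))*(m3*((r23^3)⁻¹ - lam))
        = (m4*((r14^3)⁻¹ - lam))*(m4*(lam - (r24^3)⁻¹)) := by rw [eac, edb]
    have t1 := mul_le_mul_of_nonneg_right
      (by linarith : (r14^3)⁻¹ - lam ≤ (r23^3)⁻¹ - lam) hb.le
    have t2 := mul_le_mul_of_nonneg_left
      (by linarith : lam - (r24^3)⁻¹ ≤ lam - (r13^3)⁻¹) hd.le
    have hbc_ad : ((r14^3)⁻¹ - lam)*(lam - (r24^3)⁻¹)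
        ≤ (lam - (r13^3)⁻¹)*((r23^3)⁻¹ - lam) := by linarith only [t1, t2]
    have hX : 0 < (lam - (r13^3)⁻¹)*((r23^3)⁻¹ - lam) := mul_pos ha hd
    have k : m3^2*((lam - (r13^3)⁻¹)*((r23^3)⁻¹ - lam))
        ≤ m4^2*((lam - (r13^3)⁻¹)*((r23^3)⁻¹ - lam)) := by
      linarith only [sq, mul_le_mul_of_nonneg_left hbc_ad (sq_nonneg m4)]
    exact le_of_sq_le' hm3.le hm4.le (le_of_mul_le_mul_right k hX)
  -- m4 ≤ m2
  have hm42 : m4 ≤ m2 := by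
    have keyA : m3*(m2*(p*((r23^3)⁻¹ - lam))) = m3*(m4*(s*((s^3)⁻¹ - lam))) := by
      linear_combination p*h23 - s*h34
    have eq24 : m2*(p*((r23^3)⁻¹ - lam)) = m4*(s*((s^3)⁻¹ - lam)) :=
      mul_left_cancel₀ hm3.ne' keyA
    have hpd : 0 < p*((r23^3)⁻¹ - lam) := mul_pos hp hd
    have t := mul_le_mul_of_nonneg_left crux hm4.le
    have k : m4*(p*((r23^3)⁻¹ - lam)) ≤ m2*(p*((r23^3)⁻¹ - lam)) := by
      linarith only [t, eq24]
    exact le_of_mul_le_mul_right k hpd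
  -- m3 ≤ m1
  have hm31 : m3 ≤ m1 := by
    have keyB : m4*(m1*(p*((r14^3)⁻¹ - lam))) = m4*(m3*(s*((s^3)⁻¹ - lam))) := by
      linear_combination p*h14 - s*h34
    have eq13 : m1*(p*((r14^3)⁻¹ - lam)) = m3*(s*((s^3)⁻¹ - lam)) :=
      mul_left_cancel₀ hm4.ne' keyB
    have hpcd : p*((r14^3)⁻¹ - lam) ≤ p*((r23^3)⁻¹ - lam) :=
      mul_le_mul_of_nonneg_left (by linarith) hp.le
    have hpc_sf : p*((r14^3)⁻¹ - lam) ≤ s*((s^3)⁻¹ - lam) := hpcd.trans crux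
    have hpc : 0 < p*((r14^3)⁻¹ - lam) := mul_pos hp hc
    have t := mul_le_mul_of_nonneg_left hpc_sf hm3.le
    have k : m3*(p*((r14^3)⁻¹ - lam)) ≤ m1*(p*((r14^3)⁻¹ - lam)) := by
      linarith only [t, eq13]
    exact le_of_mul_le_mul_right k hpc
  exact ⟨hm34, hm42, hm31⟩

theorem mass_partial_ordering
    (q1 q2 q3 q4 : EuclideanSpace ℝ (Fin 2)) (t : ℝ)
    (ht : 0 < t) (hpar : q2 - q1 = t • (q3 - q4))
    (hncol : ¬ Collinear ℝ ({q1, q2, q4} : Set (EuclideanSpace ℝ (Fin 2))))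
    (hord1 : dist q2 q4 ≤ dist q1 q3) (hord2 : dist q1 q2 < dist q2 q4)
    (hord3 : dist q1 q4 ≤ dist q1 q2) (hord4 : dist q2 q3 ≤ dist q1 q4)
    (hord5 : dist q3 q4 ≤ dist q2 q3)
    (m1 m2 m3 m4 lam sig : ℝ)
    (hm1 : 0 < m1) (hm2 : 0 < m2) (hm3 : 0 < m3) (hm4 : 0 < m4)
    (h12 : m1 * m2 * (dist q1 q2 ^ (-3 : ℤ) - lam) = sig * dist q3 q4 ^ 2)
    (h34 : m3 * m4 * (dist q3 q4 ^ (-3 : ℤ) - lam) = sig * dist q1 q2 ^ 2)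
    (h13 : m1 * m3 * (dist q1 q3 ^ (-3 : ℤ) - lam) = -(sig * dist q1 q2 * dist q3 q4))
    (h24 : m2 * m4 * (dist q2 q4 ^ (-3 : ℤ) - lam) = -(sig * dist q1 q2 * dist q3 q4))
    (h14 : m1 * m4 * (dist q1 q4 ^ (-3 : ℤ) - lam) = sig * dist q1 q2 * dist q3 q4)
    (h23 : m2 * m3 * (dist q2 q3 ^ (-3 : ℤ) - lam) = sig * dist q1 q2 * dist q3 q4) :
    m3 ≤ m4 ∧ m4 ≤ m2 ∧ m3 ≤ m1 := by
  have hq12 : q1 ≠ q2 := by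
    rintro rfl
    exact hncol (by simpa using collinear_pair ℝ q1 q4)
  have hp : 0 < dist q1 q2 := dist_pos.2 hq12
  have ht0 : t ≠ 0 := ht.ne'
  have hq34vec : q3 - q4 = t⁻¹ • (q2 - q1) := by
    rw [hpar, smul_smul, inv_mul_cancel₀ ht0, one_smul]
  have hs_eq : dist q3 q4 = t⁻¹ * dist q1 q2 := by
    rw [dist_eq_norm, hq34vec, norm_smul, Real.norm_eq_abs,
      abs_of_pos (inv_pos.2 ht), dist_eq_norm, norm_sub_rev]
  have hs : 0 < dist q3 q4 := by
    rw [hs_eq]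
    exact mul_pos (inv_pos.2 ht) hp
  set p : ℝ := dist q1 q2 with hp_def
  set s : ℝ := dist q3 q4 with hs_def
  set X : ℝ := inner ℝ (q2 - q1) (q4 - q1) with hX_def
  have E1 : (dist q2 q4)^2 = p^2 - 2*X + (dist q1 q4)^2 := by
    have hv : q2 - q4 = (q2 - q1) - (q4 - q1) := by abel
    rw [dist_eq_norm, hv, norm_sub_sq_real, hp_def, dist_comm q1 q2, dist_eq_norm,
      dist_comm q1 q4, dist_eq_norm, hX_def]
  have hvec23 : q2 - q3 = (1 - t⁻¹) • (q2 - q1) - (q4 - q1) := by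
    have h0 : q2 - q3 = ((q2 - q1) - (q4 - q1)) - (q3 - q4) := by abel
    rw [h0, hq34vec, sub_smul, one_smul]
    abel
  have E2 : (dist q2 q3)^2 = (1 - t⁻¹)^2*p^2 - 2*(1 - t⁻¹)*X + (dist q1 q4)^2 := by
    rw [dist_eq_norm, hvec23, norm_sub_sq_real, real_inner_smul_left, norm_smul,
      Real.norm_eq_abs, mul_pow, sq_abs, hp_def, dist_comm q1 q2, dist_eq_norm,
      dist_comm q1 q4, dist_eq_norm, hX_def]
    ring
  have hcp : (1 - t⁻¹)*p = p - s := by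
    rw [hs_eq]; ring
  have idpre : p*(dist q2 q3)^2 = p*(dist q1 q4)^2
      + (s-p)*((dist q1 q4)^2+p^2-(dist q2 q4)^2) + p*(s-p)^2 := by
    linear_combination p*E2 + (s-p)*E1 + (-2*X + p*((1 - t⁻¹)*p + p - s))*hcp
  have zp : ∀ r : ℝ, r ^ (-3 : ℤ) = (r^3)⁻¹ := by
    intro r
    rw [zpow_neg]
    norm_cast
  rw [zp] at h12 h34 h13 h24 h14 h23
  exact masses_lemma p s (dist q1 q3) (dist q1 q4) (dist q2 q3) (dist q2 q4)
    m1 m2 m3 m4 lam sig hp hs hord5 hord4 hord3 hord2 hord1 hm1 hm2 hm3 hm4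
    idpre h12 h34 h13 h24 h14 h23
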